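/- Let (M, p) be a finite pointed metric space. Then the Lipschitz free space F(M, p), i.e., the linear span of the evaluation molecules {δ_x − δ_p : x ∈ M} in the dual of Lip₀(M,p), is a finite-dimensional polyhedral Banach space: its closed unit ball equals the convex hull of the finitely many molecules μ_{x,y} = (δ_x − δ_y)/d(x,y) for x ≠ y in M. -/

import Mathlib

/-- The Lipschitz free space of a finite pointed metric space is polyhedral: identifying
`F(M,p)` (the span of the molecules `δ_x − δ_p` in `Lip₀(M,p)*`) with the functions
`a : M → ℝ` with `∑ a = 0` acting on `f ∈ Lip₀(M,p)` by `∑ x, a x * f x`, its closed unit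
ball — the set of such `a` with `|∑ x, a x * f x| ≤ 1` for every `1`-Lipschitz `f` with
`f p = 0` — equals the convex hull of the finitely many molecules
`μ_{x,y} = (δ_x − δ_y)/d(x,y)`, `x ≠ y`. -/
theorem lipschitzFree_ball_eq_convexHull_molecules
    (M : Type) [MetricSpace M] [Fintype M] [DecidableEq M] [Nontrivial M] (p : M) :
    {a : M → ℝ | (∑ x, a x) = 0 ∧
        ∀ f : M → ℝ, f p = 0 → (∀ x y : M, |f x - f y| ≤ dist x y) →
          |∑ x, a x * f x| ≤ 1} =
      convexHull ℝ {a : M → ℝ | ∃ x y : M, x ≠ y ∧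
        a = fun z => ((if z = x then (1 : ℝ) else 0) - (if z = y then 1 else 0)) /
          dist x y} := by
  classical
  set mol : M → M → (M → ℝ) := fun x y z =>
    ((if z = x then (1 : ℝ) else 0) - (if z = y then 1 else 0)) / dist x y with hmoldef
  set Smol : Set (M → ℝ) := {a : M → ℝ | ∃ x y : M, x ≠ y ∧ a = mol x y} with hSmol
  set S : Set (M → ℝ) := {a : M → ℝ | (∑ x, a x) = 0 ∧
        ∀ f : M → ℝ, f p = 0 → (∀ x y : M, |f x - f y| ≤ dist x y) →
          |∑ x, a x * f x| ≤ 1} with hSdef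
  have molsum : ∀ (x y : M) (f : M → ℝ),
      (∑ z, mol x y z * f z) = (f x - f y) / dist x y := by
    intro x y f
    simp only [hmoldef, div_mul_eq_mul_div, ← Finset.sum_div, sub_mul, ite_mul, one_mul,
      zero_mul, Finset.sum_sub_distrib, Finset.sum_ite_eq', Finset.mem_univ, if_true]
  have hSconv : Convex ℝ S := by
    intro a haS b hbS s t hs ht hst
    constructor
    · have : (∑ x, (s • a + t • b) x) = s * (∑ x, a x) + t * (∑ x, b x) := by
        simp [Finset.mul_sum, Finset.sum_add_distrib]
      rw [this, haS.1, hbS.1]; ring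
    · intro f hfp hlip
      have : (∑ x, (s • a + t • b) x * f x)
          = s * (∑ x, a x * f x) + t * (∑ x, b x * f x) := by
        simp [Finset.mul_sum, Finset.sum_add_distrib, add_mul, mul_assoc]
      rw [this]
      calc |s * (∑ x, a x * f x) + t * (∑ x, b x * f x)|
          ≤ |s * (∑ x, a x * f x)| + |t * (∑ x, b x * f x)| := abs_add_le _ _
        _ ≤ s * 1 + t * 1 := by
            rw [abs_mul, abs_mul, abs_of_nonneg hs, abs_of_nonneg ht]
            exact add_le_add (mul_le_mul_of_nonneg_left (haS.2 f hfp hlip) hs)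
              (mul_le_mul_of_nonneg_left (hbS.2 f hfp hlip) ht)
        _ = 1 := by rw [mul_one, mul_one, hst]
  have hsub : Smol ⊆ S := by
    rintro a ⟨x, y, hxy, rfl⟩
    have hd : 0 < dist x y := dist_pos.2 hxy
    constructor
    · have := molsum x y (fun _ => 1)
      simpa using this
    · intro f _ hlip
      rw [molsum x y f, abs_div, abs_of_pos hd, div_le_one hd]
      exact hlip x y
  have hfin : Smol.Finite := by
    apply Set.Finite.subset (Set.finite_range (fun q : M × M => mol q.1 q.2))
    rintro a ⟨x, y, _, rfl⟩
    exact ⟨(x, y), rfl⟩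
  -- hard direction
  apply Set.Subset.antisymm _ (convexHull_min hsub hSconv)
  intro a haS
  by_contra haK
  obtain ⟨φ, u, hK, hua⟩ := geometric_hahn_banach_closed_point
    (convex_convexHull ℝ Smol) (hfin.isClosed_convexHull (𝕜 := ℝ)) haK
  set g : M → ℝ := fun i => φ (fun j => if j = i then (1 : ℝ) else 0) with hg
  have hrep : ∀ b : M → ℝ, b = ∑ i, b i • (fun j => if j = i then (1 : ℝ) else 0) := by
    intro b
    ext z
    simp [Finset.sum_apply]
  have hφ : ∀ b : M → ℝ, φ b = ∑ i, b i * g i := by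
    intro b
    conv_lhs => rw [hrep b]
    rw [map_sum]
    simp [hg]
  have hφmol : ∀ x y : M, φ (mol x y) = (g x - g y) / dist x y := by
    intro x y
    rw [hφ, molsum]
  have hmolK : ∀ x y : M, x ≠ y → (g x - g y) / dist x y < u := by
    intro x y hxy
    rw [← hφmol]
    exact hK _ (subset_convexHull ℝ Smol ⟨x, y, hxy, rfl⟩)
  have hu : 0 < u := by
    obtain ⟨x, y, hxy⟩ := exists_pair_ne M
    have h1 := hmolK x y hxy
    have h2 := hmolK y x hxy.symm
    rw [dist_comm] at h2
    have hd : 0 < dist x y := dist_pos.2 hxy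
    rw [div_lt_iff₀ hd] at h1 h2
    nlinarith
  have hbound : ∀ x y : M, |g x - g y| ≤ u * dist x y := by
    intro x y
    rcases eq_or_ne x y with rfl | hxy
    · simp [mul_nonneg hu.le dist_nonneg]
    · have hd : 0 < dist x y := dist_pos.2 hxy
      have h1 := hmolK x y hxy
      have h2 := hmolK y x hxy.symm
      rw [dist_comm] at h2
      rw [div_lt_iff₀ hd] at h1 h2
      rw [abs_sub_le_iff]
      constructor <;> nlinarith
  set f : M → ℝ := fun z => (g z - g p) / u with hf
  have hfp : f p = 0 := by simp [hf]
  have hlip : ∀ x y : M, |f x - f y| ≤ dist x y := by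
    intro x y
    have : f x - f y = (g x - g y) / u := by
      simp only [hf]; field_simp; ring
    rw [this, abs_div, abs_of_pos hu, div_le_iff₀ hu]
    calc |g x - g y| ≤ u * dist x y := hbound x y
      _ = dist x y * u := mul_comm _ _
  have hval : (∑ x, a x * f x) = φ a / u := by
    rw [hφ a]
    have hterm : ∀ x : M, a x * f x = (a x * g x) / u - (a x * g p) / u := by
      intro x
      simp only [hf]
      field_simp
    simp_rw [hterm, Finset.sum_sub_distrib, ← Finset.sum_div, ← Finset.sum_mul, haS.1]
    simp
  have hle := haS.2 f hfp hlip
  rw [hval] at hle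
  have hgt : 1 < φ a / u := (one_lt_div hu).2 hua
  have := le_abs_self (φ a / u)
  linarith
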